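/- Let (A,m) be a Noetherian local ring with infinite residue field, I an m-primary ideal, and M a one-dimensional finitely generated A-module. Let b be a positive integer such that IM ⊆ m^b M. If e_0(I,M) ≠ e_0(m^b,M), then the length of the degree-zero component of G_I(M)/H^0_{G_+}(G_I(M)) is at least b+1. -/

import Mathlib

open Pointwise IsLocalRing

namespace HilbC

variable (A : Type*) [CommRing A]

/-- The colon submodule `(N :_M J) = {x ∈ M | J x ⊆ N}`. -/
def icolon {M : Type*} [AddCommGroup M] [Module A M] (N : Submodule A M) (J : Ideal A) :
    Submodule A M where
  carrier := {x | ∀ a ∈ J, a • x ∈ N}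
  add_mem' := fun hx hy a ha => by rw [smul_add]; exact N.add_mem (hx a ha) (hy a ha)
  zero_mem' := fun a ha => by rw [smul_zero]; exact N.zero_mem
  smul_mem' := fun c x hx a ha => by rw [smul_comm]; exact N.smul_mem c (hx a ha)

variable (M : Type*) [AddCommGroup M] [Module A M]

/-- The length of a module, as the Krull dimension (longest chain) of its submodule lattice. -/
noncomputable def llen : ℕ∞ := (Order.krullDim (Submodule A M)).unbotD 0

/-- Length as an integer (finite-length situations). -/
noncomputable def llenZ : ℤ := ((llen A M).toNat : ℤ)

/-- `ℓ(M/N)` as an `ℕ∞`. -/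
noncomputable def qlen (N : Submodule A M) : ℕ∞ := llen A (M ⧸ N)

/-- `ℓ(M/N)` as an integer. -/
noncomputable def qlenZ (N : Submodule A M) : ℤ := ((qlen A M N).toNat : ℤ)

/-- `ℓ(N/(N ⊓ P))` as an `ℕ∞`. -/
noncomputable def sqlen (N P : Submodule A M) : ℕ∞ :=
  llen A (↥N ⧸ (Submodule.comap N.subtype P))

noncomputable def sqlenZ (N P : Submodule A M) : ℤ := ((sqlen A M N P).toNat : ℤ)

/-- The `n`-th piece `I^n M` of the `I`-adic filtration. -/
def pw (I : Ideal A) (n : ℕ) : Submodule A M := I ^ n • ⊤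

/-- Hilbert–Samuel function `n ↦ ℓ(M/I^n M)` (as an integer). -/
noncomputable def hsZ (I : Ideal A) (n : ℕ) : ℤ := qlenZ A M (pw A M I n)

/-- Hilbert function `n ↦ ℓ(I^n M/I^{n+1} M)` (as an integer). -/
noncomputable def hfZ (I : Ideal A) (n : ℕ) : ℤ := sqlenZ A M (pw A M I n) (pw A M I (n + 1))

/-- The Ratliff–Rush type saturation `⋃ₖ (I^{n+1+k} M :_M I^k)`, i.e. the submodule of `M`
representing (the lift of) the degree `n` part of the `G₊`-torsion of `G_I(M)`. -/
def rrsat (I : Ideal A) (n : ℕ) : Submodule A M := ⨆ k : ℕ, icolon A (pw A M I (n + 1 + k)) (I ^ k)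

/-- `ℓ(H⁰_{G₊}(G_I(M))_n)`: the length of the degree `n` piece of the `G₊`-torsion submodule of
`G_I(M)`, which is `((⋃ₖ (I^{n+1+k}M :_M I^k)) ∩ I^n M)/I^{n+1}M`. -/
noncomputable def h0 (I : Ideal A) (n : ℕ) : ℕ∞ :=
  sqlen A M (rrsat A M I n ⊓ pw A M I n) (pw A M I (n + 1))

noncomputable def h0Z (I : Ideal A) (n : ℕ) : ℤ := ((h0 A M I n).toNat : ℤ)

/-- `ℓ(H⁰_{G₊}(G_I(M))_n)` for `n : ℤ` (vanishing in negative degrees). -/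
noncomputable def h0Zx (I : Ideal A) (n : ℤ) : ℤ := if n < 0 then 0 else h0Z A M I n.toNat

/-- `ℓ(H¹_{G₊}(G_I(M))_n)` for a one-dimensional module, obtained from the Grothendieck–Serre
formula `H_{I,M}(n) - HP_{I,M}(n) = ℓ(H⁰_n) - ℓ(H¹_n)`; here `e0 = HP_{I,M}` is the (constant)
Hilbert polynomial of `G_I(M)`, and the Hilbert function vanishes in negative degrees. -/
noncomputable def h1Zx (I : Ideal A) (e0 : ℤ) (n : ℤ) : ℤ :=
  if n < 0 then e0 else h0Z A M I n.toNat + e0 - hfZ A M I n.toNat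

/-- `a₀(G_I(M)) ≤ t`. -/
def a0le (I : Ideal A) (t : ℤ) : Prop := ∀ n : ℤ, t < n → h0Zx A M I n = 0

/-- `a₀(G_I(M)) < t`. -/
def a0lt (I : Ideal A) (t : ℤ) : Prop := ∀ n : ℤ, t ≤ n → h0Zx A M I n = 0

/-- `a₁(G_I(M)) = t` (one-dimensional case). -/
def a1eq (I : Ideal A) (e0 t : ℤ) : Prop :=
  h1Zx A M I e0 t ≠ 0 ∧ ∀ n : ℤ, t < n → h1Zx A M I e0 n = 0

/-- `reg(G_I(M)) = max{a₀, a₁ + 1} = r` (one-dimensional case). -/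
def regeq (I : Ideal A) (e0 r : ℤ) : Prop :=
  (∀ n : ℤ, r < n → h0Zx A M I n = 0) ∧ (∀ n : ℤ, r ≤ n → h1Zx A M I e0 n = 0) ∧
    (h0Zx A M I r ≠ 0 ∨ h1Zx A M I e0 (r - 1) ≠ 0)

/-- The postulation number of `G_I(M)` for a one-dimensional module (the Hilbert
polynomial is the constant `e0`). -/
noncomputable def pnum (I : Ideal A) (e0 : ℤ) : ℕ :=
  sInf {p : ℕ | ∀ n : ℕ, p ≤ n → hfZ A M I n = e0}

/-- The dimension of the module `M` is `d`. -/
def dimEq (d : ℕ) : Prop := ringKrullDim (A ⧸ Module.annihilator A M) = d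

/-- `M` is a Cohen–Macaulay module of dimension `d`: it has dimension `d` and admits a
regular sequence of length `d` inside the maximal ideal. -/
def isCM [IsLocalRing A] (d : ℕ) : Prop :=
  dimEq A M d ∧ ∃ rs : List A, rs.length = d ∧ (∀ a ∈ rs, a ∈ maximalIdeal A) ∧
    RingTheory.Sequence.IsRegular M rs

/-- `I` is an `m`-primary ideal of the local ring `A`. -/
def mprim [IsLocalRing A] (I : Ideal A) : Prop := I.radical = maximalIdeal A

/-- minimal number of generators of an ideal, `μ(J) = ℓ(J/mJ)`. -/
noncomputable def mu [IsLocalRing A] (J : Ideal A) : ℤ :=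
  sqlenZ A A (J : Submodule A A) (maximalIdeal A • (J : Submodule A A))

/-- The binomial coefficient `C(x, 2)` for an integer `x`. -/
def c2 (x : ℤ) : ℤ := x * (x - 1) / 2

/-- The binomial coefficient `C(x, 3)` for an integer `x`. -/
def c3 (x : ℤ) : ℤ := x * (x - 1) * (x - 2) / 6


/-- The Hilbert coefficients `e_i = Q^{(i)}(1)/i!` extracted from the numerator polynomial `Q`
of the Hilbert series `P_{I,M}(z) = Q(z)/(1-z)^d`. -/
noncomputable def eQ (Q : Polynomial ℤ) (i : ℕ) : ℤ :=
  ∑ j ∈ Finset.range (Q.natDegree + 1), Q.coeff j * (j.choose i : ℤ)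

end HilbC

open Pointwise IsLocalRing

namespace HilbAux

open HilbC Submodule

variable {A : Type*} [CommRing A] {M : Type*} [AddCommGroup M] [Module A M]
variable {N : Type*} [AddCommGroup N] [Module A N]

lemma llen_le_of_strictMono (f : Submodule A M → Submodule A N) (hf : StrictMono f) :
    HilbC.llen A M ≤ HilbC.llen A N := by
  rw [HilbC.llen, WithBot.unbotD_le_iff (by simp)]
  exact (Order.krullDim_le_of_strictMono f hf).trans (WithBot.le_coe_unbotD _ _)

lemma llen_congr (e : M ≃ₗ[A] N) : HilbC.llen A M = HilbC.llen A N := by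
  unfold HilbC.llen
  rw [Order.krullDim_eq_of_orderIso (Submodule.orderIsoMapComap e)]

lemma le_llen_of_le_krullDim (n : ℕ) (h : (n : WithBot ℕ∞) ≤ Order.krullDim (Submodule A M)) :
    (n : ℕ∞) ≤ HilbC.llen A M := by
  rcases k : Order.krullDim (Submodule A M) with _ | x
  · rw [k] at h
    replace h : (n : WithBot ℕ∞) ≤ ⊥ := h
    rw [le_bot_iff] at h
    simp at h
  · rw [k] at h
    rw [HilbC.llen, k]
    rw [show WithBot.unbotD 0 (some x) = x from rfl]
    replace h : (n : WithBot ℕ∞) ≤ (x : WithBot ℕ∞) := h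
    exact_mod_cast h

lemma qlen_anti {P Q : Submodule A M} (h : P ≤ Q) :
    HilbC.qlen A M Q ≤ HilbC.qlen A M P := by
  apply llen_le_of_strictMono (fun S => Submodule.map P.mkQ (Submodule.comap Q.mkQ S))
  have hmono : Monotone (fun S : Submodule A (M ⧸ Q) =>
      Submodule.map P.mkQ (Submodule.comap Q.mkQ S)) :=
    fun S T hST => Submodule.map_mono (Submodule.comap_mono hST)
  refine hmono.strictMono_of_injective (fun S T hST => ?_)
  have h1 := congrArg (Submodule.comap P.mkQ) hST
  rw [Submodule.comap_map_mkQ, Submodule.comap_map_mkQ,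
    sup_eq_right.mpr (h.trans (Submodule.le_comap_mkQ Q S)),
    sup_eq_right.mpr (h.trans (Submodule.le_comap_mkQ Q T))] at h1
  have h2 := congrArg (Submodule.map Q.mkQ) h1
  rwa [Submodule.map_comap_eq_self (by rw [Submodule.range_mkQ]; exact le_top),
    Submodule.map_comap_eq_self (by rw [Submodule.range_mkQ]; exact le_top)] at h2

lemma mul_smul_top (J K : Ideal A) (P : Submodule A M) : (J * K) • P = J • (K • P) := by
  rw [← Ideal.smul_eq_mul, Submodule.smul_assoc]

lemma pw_zero (I : Ideal A) : HilbC.pw A M I 0 = ⊤ := by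
  rw [HilbC.pw, pow_zero, Ideal.one_eq_top, Submodule.top_smul]

lemma sqlen_top (P : Submodule A M) : HilbC.sqlen A M ⊤ P = HilbC.qlen A M P := by
  rw [HilbC.sqlen, HilbC.qlen]
  refine llen_congr (Submodule.Quotient.equiv _ _ Submodule.topEquiv ?_)
  ext y
  simp only [Submodule.mem_map, Submodule.mem_comap]
  constructor
  · rintro ⟨x, hx, rfl⟩
    exact hx
  · intro hy
    exact ⟨⟨y, trivial⟩, hy, rfl⟩

lemma map_mkQ_strict {W X Y : Submodule A M} (hX : W ≤ X) (h : X < Y) :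
    Submodule.map W.mkQ X < Submodule.map W.mkQ Y := by
  refine lt_of_le_of_ne (Submodule.map_mono h.le) fun he => h.ne ?_
  have := congrArg (Submodule.comap W.mkQ) he
  rwa [Submodule.comap_map_mkQ, Submodule.comap_map_mkQ, sup_eq_right.mpr hX,
    sup_eq_right.mpr (hX.trans h.le)] at this

lemma slope_le {a a' c c' : ℤ}
    (h : ∀ᶠ n : ℕ in Filter.atTop, a * (n : ℤ) + c ≤ a' * (n : ℤ) + c') : a ≤ a' := by
  by_contra hlt
  push_neg at hlt
  obtain ⟨L, hL⟩ := Filter.eventually_atTop.mp h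
  set n : ℕ := L + (c' - c).toNat + 1 with hn
  have h1 := hL n (by omega)
  have h5 : (c' - c).toNat < n := by omega
  have h2 : (c' - c) < (n : ℤ) :=
    lt_of_le_of_lt (Int.self_le_toNat _) (by exact_mod_cast h5)
  have h3 : (1 : ℤ) ≤ a - a' := by omega
  have h4 : (0 : ℤ) ≤ (n : ℤ) := Int.ofNat_nonneg n
  nlinarith

lemma linear_eventually_zero {e0 e1 : ℤ}
    (h : ∀ᶠ n : ℕ in Filter.atTop, e0 * ((n : ℤ) + 1) - e1 = 0) : e0 = 0 := by
  obtain ⟨L, hL⟩ := Filter.eventually_atTop.mp h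
  have h1 := hL L le_rfl
  have h2 := hL (L + 1) (by omega)
  push_cast at h2
  linarith

end HilbAux
/-- Lemma `I4`(ii).  Let `(A,m)` be a Noetherian local ring with infinite
residue field, `I` an `m`-primary ideal and `M` a one-dimensional finitely generated module with
`IM ⊆ m^b M` (`b ≥ 1`).  The Hilbert coefficients of `M` with respect to `I` (resp. `m^b`) are
given by the Hilbert–Samuel polynomials (degree `d = 1` case).  If `e₀(I,M) ≠ e₀(m^b,M)` then
`ℓ((G_I(M)/H⁰_{G₊}(G_I(M)))₀) ≥ b + 1`; the degree-zero piece of `G_I(M)/H⁰_{G₊}(G_I(M))` is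
`I⁰M/(I⁰M ∩ ⋃ₖ (I^{1+k}M :_M I^k))`. -/
theorem stmt0 {A : Type*} [CommRing A] [IsNoetherianRing A] [IsLocalRing A]
    [Infinite (IsLocalRing.ResidueField A)]
    {M : Type*} [AddCommGroup M] [Module A M] [Module.Finite A M]
    (I : Ideal A) (hI : HilbC.mprim A I)
    (hdim : HilbC.dimEq A M 1)
    (b : ℕ) (hb : 1 ≤ b)
    (hIb : I • (⊤ : Submodule A M) ≤ (IsLocalRing.maximalIdeal A) ^ b • ⊤)
    (e e' : ℕ → ℤ)
    (he : ∀ᶠ n in Filter.atTop,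
      HilbC.hsZ A M I (n + 1) = e 0 * ((n : ℤ) + 1) - e 1)
    (he' : ∀ᶠ n in Filter.atTop,
      HilbC.hsZ A M ((IsLocalRing.maximalIdeal A) ^ b) (n + 1) = e' 0 * ((n : ℤ) + 1) - e' 1)
    (hne : e 0 ≠ e' 0) :
    ((b : ℕ∞) + 1) ≤ HilbC.sqlen A M (HilbC.pw A M I 0) (HilbC.rrsat A M I 0) := by
  classical
  have hNoeth : IsNoetherian A M := inferInstance
  set m := IsLocalRing.maximalIdeal A with hmdef
  set W := HilbC.rrsat A M I 0 with hWdef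
  rw [HilbAux.pw_zero, HilbAux.sqlen_top]
  by_cases hc : ∃ i ≤ b, (m ^ i • ⊤ : Submodule A M) ≤ W
  · -- contradiction branch
    exfalso
    obtain ⟨i, hib, hiW⟩ := hc
    have hmbW : (m ^ b • ⊤ : Submodule A M) ≤ W :=
      le_trans (Submodule.smul_mono (Ideal.pow_le_pow_right hib) le_rfl) hiW
    -- stabilization of the colon chain
    have hmono : Monotone (fun k => HilbC.icolon A (HilbC.pw A M I (1 + k)) (I ^ k)) := by
      refine monotone_nat_of_le_succ fun k => ?_
      intro x hx
      have hx' : ∀ a ∈ I ^ k, a • x ∈ HilbC.pw A M I (1 + k) := hx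
      show ∀ a ∈ I ^ (k + 1), a • x ∈ HilbC.pw A M I (1 + (k + 1))
      intro a ha
      rw [pow_succ] at ha
      have h1 : a • x ∈ I • HilbC.pw A M I (1 + k) := by
        refine Submodule.mul_induction_on ha (fun r hr s hs => ?_) (fun y z hy hz => ?_)
        · rw [mul_comm, mul_smul]
          exact Submodule.smul_mem_smul hs (hx' r hr)
        · rw [add_smul]; exact Submodule.add_mem _ hy hz
      have h2 : I • HilbC.pw A M I (1 + k) = HilbC.pw A M I (1 + (k + 1)) := by
        show I • (I ^ (1 + k) • ⊤) = I ^ (1 + (k + 1)) • ⊤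
        rw [← HilbAux.mul_smul_top, ← pow_succ', show 1 + k + 1 = 1 + (k + 1) by omega]
      rwa [h2] at h1
    obtain ⟨k, hk⟩ := (monotone_stabilizes_iff_noetherian.mpr hNoeth)
      ⟨fun k => HilbC.icolon A (HilbC.pw A M I (1 + k)) (I ^ k), hmono⟩
    have hWk : W = HilbC.icolon A (HilbC.pw A M I (1 + k)) (I ^ k) := by
      rw [hWdef, HilbC.rrsat]
      refine le_antisymm (iSup_le fun j => ?_)
        (le_iSup (fun j => HilbC.icolon A (HilbC.pw A M I (0 + 1 + j)) (I ^ j)) k)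
      rcases le_total j k with h | h
      · exact hmono h
      · exact (hk j h).ge
    have hcolon : ∀ x ∈ W, ∀ a ∈ I ^ k, a • x ∈ HilbC.pw A M I (1 + k) := by
      intro x hx
      rw [hWk] at hx
      exact hx
    -- I^n M ⊆ (m^b)^n M
    have hpow : ∀ n, HilbC.pw A M I n ≤ HilbC.pw A M (m ^ b) n := by
      intro n
      induction n with
      | zero => rw [HilbAux.pw_zero, HilbAux.pw_zero]
      | succ n ih =>
        show I ^ (n + 1) • (⊤ : Submodule A M) ≤ (m ^ b) ^ (n + 1) • ⊤
        calc I ^ (n + 1) • (⊤ : Submodule A M) = I ^ n • (I • ⊤) := by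
              rw [← HilbAux.mul_smul_top, ← pow_succ]
          _ ≤ I ^ n • (m ^ b • ⊤) := Submodule.smul_mono le_rfl hIb
          _ = m ^ b • (I ^ n • ⊤) := by
              rw [← HilbAux.mul_smul_top, ← HilbAux.mul_smul_top, mul_comm]
          _ ≤ m ^ b • ((m ^ b) ^ n • ⊤) := Submodule.smul_mono le_rfl ih
          _ = (m ^ b) ^ (n + 1) • ⊤ := by rw [← HilbAux.mul_smul_top, ← pow_succ']
    -- m^b I^{k+j} M ⊆ I^{k+j+1} M
    have hbase : ∀ j : ℕ, m ^ b • HilbC.pw A M I (k + j) ≤ HilbC.pw A M I (k + j + 1) := by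
      intro j
      have h0 : I ^ k • (m ^ b • (⊤ : Submodule A M)) ≤ HilbC.pw A M I (1 + k) :=
        Submodule.smul_le.mpr fun r hr x hx => hcolon x (hmbW hx) r hr
      calc m ^ b • HilbC.pw A M I (k + j)
          = I ^ j • (I ^ k • (m ^ b • (⊤ : Submodule A M))) := by
            show m ^ b • (I ^ (k + j) • (⊤ : Submodule A M)) = _
            rw [← HilbAux.mul_smul_top, ← HilbAux.mul_smul_top, ← HilbAux.mul_smul_top]
            congr 1
            rw [pow_add]; ring
        _ ≤ I ^ j • HilbC.pw A M I (1 + k) := Submodule.smul_mono le_rfl h0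
        _ = HilbC.pw A M I (k + j + 1) := by
            show I ^ j • (I ^ (1 + k) • (⊤ : Submodule A M)) = I ^ (k + j + 1) • ⊤
            rw [← HilbAux.mul_smul_top, ← pow_add]
            congr 2
            omega
    -- (m^b)^j I^k M ⊆ I^{k+j} M
    have hjstep : ∀ j : ℕ, (m ^ b) ^ j • HilbC.pw A M I k ≤ HilbC.pw A M I (k + j) := by
      intro j
      induction j with
      | zero =>
        rw [pow_zero, Ideal.one_eq_top, Submodule.top_smul]
        exact le_of_eq (by rw [Nat.add_zero])
      | succ j ih =>
        calc (m ^ b) ^ (j + 1) • HilbC.pw A M I k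
            = m ^ b • ((m ^ b) ^ j • HilbC.pw A M I k) := by
              rw [← HilbAux.mul_smul_top, ← pow_succ']
          _ ≤ m ^ b • HilbC.pw A M I (k + j) := Submodule.smul_mono le_rfl ih
          _ ≤ HilbC.pw A M I (k + j + 1) := hbase j
    obtain ⟨c, hcle⟩ := Ideal.exists_radical_pow_le_of_fg I (IsNoetherian.noetherian _)
    have hrad : I.radical = m := hI
    rw [hrad] at hcle
    -- sandwich
    obtain ⟨q, hq⟩ : ∃ q, q = c * k := ⟨_, rfl⟩
    have hsq : ∀ n, HilbC.pw A M (m ^ b) (n + q) ≤ HilbC.pw A M I (n + k) := by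
      intro n
      have h1 : (m ^ b) ^ q ≤ I ^ k := by
        calc (m ^ b) ^ q = m ^ (b * q) := by rw [← pow_mul]
          _ ≤ m ^ q := Ideal.pow_le_pow_right (Nat.le_mul_of_pos_left _ hb)
          _ = (m ^ c) ^ k := by rw [← pow_mul, hq]
          _ ≤ I ^ k := Ideal.pow_right_mono hcle k
      calc HilbC.pw A M (m ^ b) (n + q)
          = (m ^ b) ^ n • ((m ^ b) ^ q • (⊤ : Submodule A M)) := by
            show (m ^ b) ^ (n + q) • (⊤ : Submodule A M) = _
            rw [← HilbAux.mul_smul_top, ← pow_add]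
        _ ≤ (m ^ b) ^ n • (I ^ k • ⊤) := Submodule.smul_mono le_rfl (Submodule.smul_mono h1 le_rfl)
        _ ≤ HilbC.pw A M I (k + n) := hjstep n
        _ = HilbC.pw A M I (n + k) := by rw [add_comm]
    have hpw_anti : ∀ (J : Ideal A) {s t : ℕ}, s ≤ t → HilbC.pw A M J t ≤ HilbC.pw A M J s :=
      fun J s t h => Submodule.smul_mono (Ideal.pow_le_pow_right h) le_rfl
    by_cases htop : ∃ n0, HilbC.qlen A M (HilbC.pw A M (m ^ b) n0) = ⊤
    · obtain ⟨n0, hn0⟩ := htop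
      have hJtop : ∀ n, n0 ≤ n → HilbC.qlen A M (HilbC.pw A M (m ^ b) n) = ⊤ :=
        fun n hn => top_le_iff.mp (hn0 ▸ HilbAux.qlen_anti (hpw_anti _ hn))
      have hItop : ∀ n, n0 ≤ n → HilbC.qlen A M (HilbC.pw A M I n) = ⊤ :=
        fun n hn => top_le_iff.mp ((hJtop n hn) ▸ HilbAux.qlen_anti (hpow n))
      obtain ⟨N1, hN1⟩ := Filter.eventually_atTop.mp he
      obtain ⟨N2, hN2⟩ := Filter.eventually_atTop.mp he'
      have hzI : ∀ᶠ n : ℕ in Filter.atTop, e 0 * ((n : ℤ) + 1) - e 1 = 0 := by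
        refine Filter.eventually_atTop.mpr ⟨N1 + n0, fun n hn => ?_⟩
        have h2 : HilbC.hsZ A M I (n + 1) = 0 := by
          unfold HilbC.hsZ HilbC.qlenZ
          rw [hItop (n + 1) (by omega)]
          simp
        rw [← hN1 n (by omega), h2]
      have hzJ : ∀ᶠ n : ℕ in Filter.atTop, e' 0 * ((n : ℤ) + 1) - e' 1 = 0 := by
        refine Filter.eventually_atTop.mpr ⟨N2 + n0, fun n hn => ?_⟩
        have h2 : HilbC.hsZ A M (m ^ b) (n + 1) = 0 := by
          unfold HilbC.hsZ HilbC.qlenZ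
          rw [hJtop (n + 1) (by omega)]
          simp
        rw [← hN2 n (by omega), h2]
      exact hne ((HilbAux.linear_eventually_zero hzI).trans
        (HilbAux.linear_eventually_zero hzJ).symm)
    · push_neg at htop
      have hfinJ : ∀ n, HilbC.qlen A M (HilbC.pw A M (m ^ b) n) ≠ ⊤ := htop
      have hfinI : ∀ n, k ≤ n → HilbC.qlen A M (HilbC.pw A M I n) ≠ ⊤ := by
        intro n hn
        have h1 : HilbC.pw A M (m ^ b) ((n - k) + q) ≤ HilbC.pw A M I n := by
          have h2 := hsq (n - k)
          rwa [Nat.sub_add_cancel hn] at h2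
        exact ne_top_of_le_ne_top (hfinJ _) (HilbAux.qlen_anti h1)
      have hle1 : ∀ n, k ≤ n → HilbC.hsZ A M (m ^ b) n ≤ HilbC.hsZ A M I n := by
        intro n hn
        unfold HilbC.hsZ HilbC.qlenZ
        exact_mod_cast ENat.toNat_le_toNat (HilbAux.qlen_anti (hpow n)) (hfinI n hn)
      have hle2 : ∀ n, k ≤ n →
          HilbC.hsZ A M I n ≤ HilbC.hsZ A M (m ^ b) ((n - k) + q) := by
        intro n hn
        have h1 : HilbC.pw A M (m ^ b) ((n - k) + q) ≤ HilbC.pw A M I n := by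
          have h2 := hsq (n - k)
          rwa [Nat.sub_add_cancel hn] at h2
        unfold HilbC.hsZ HilbC.qlenZ
        exact_mod_cast ENat.toNat_le_toNat (HilbAux.qlen_anti h1) (hfinJ _)
      obtain ⟨N1, hN1⟩ := Filter.eventually_atTop.mp he
      obtain ⟨N2, hN2⟩ := Filter.eventually_atTop.mp he'
      have key1 : e' 0 ≤ e 0 := by
        apply HilbAux.slope_le (a := e' 0) (c := e' 0 - e' 1) (a' := e 0) (c' := e 0 - e 1)
        refine Filter.eventually_atTop.mpr ⟨N1 + N2 + k + 1, fun n hn => ?_⟩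
        have h3 := hle1 (n + 1) (by omega)
        rw [hN1 n (by omega), hN2 n (by omega)] at h3
        linarith
      have key2 : e 0 ≤ e' 0 := by
        apply HilbAux.slope_le (a := e 0) (c := e 0 - e 1)
          (a' := e' 0) (c' := e' 0 * ((q : ℤ) - (k : ℤ) + 1) - e' 1)
        refine Filter.eventually_atTop.mpr ⟨N1 + N2 + k + 1, fun n hn => ?_⟩
        have h3 := hle2 (n + 1) (by omega)
        have hidx : (n + 1 - k) + q = (n - k + q) + 1 := by omega
        rw [hidx] at h3
        rw [hN1 n (by omega)] at h3
        rw [hN2 (n - k + q) (le_trans (by omega) (Nat.le_add_right (n - k) q))] at h3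
        have hcast : ((n - k + q : ℕ) : ℤ) = (n : ℤ) - (k : ℤ) + (q : ℤ) := by
          have hkn : k ≤ n := by omega
          push_cast [hkn]
          ring
        rw [hcast] at h3
        linarith
      exact hne (le_antisymm key2 key1)
  · -- chain branch
    push_neg at hc
    have sc : ∀ i, i ≤ b → W ⊔ m ^ (i + 1) • ⊤ < W ⊔ m ^ i • ⊤ := by
      intro i hi
      refine lt_of_le_of_ne
        (sup_le_sup_left (Submodule.smul_mono (Ideal.pow_le_pow_right (Nat.le_succ i)) le_rfl) W)
        fun heq => hc i hi ?_
      have hfg : (m ^ i • ⊤ : Submodule A M).FG := IsNoetherian.noetherian _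
      have hj : m ≤ Ideal.jacobson ⊥ := IsLocalRing.maximalIdeal_le_jacobson ⊥
      have hNN : (m ^ i • ⊤ : Submodule A M) ≤ W ⊔ m • (m ^ i • ⊤ : Submodule A M) := by
        calc (m ^ i • ⊤ : Submodule A M) ≤ W ⊔ m ^ i • ⊤ := le_sup_right
          _ = W ⊔ m ^ (i + 1) • ⊤ := heq.symm
          _ = W ⊔ m • (m ^ i • ⊤) := by rw [← HilbAux.mul_smul_top, ← pow_succ']
      exact Submodule.le_of_le_smul_of_le_jacobson_bot hfg hj hNN
    let p : LTSeries (Submodule A (M ⧸ W)) :=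
      { length := b + 1
        toFun := fun j => Submodule.map W.mkQ (W ⊔ m ^ (b + 1 - (j : ℕ)) • ⊤)
        step := fun i => by
          have hlt := i.isLt
          simp only [Fin.coe_castSucc, Fin.val_succ]
          have h1 : b + 1 - (i : ℕ) = (b - (i : ℕ)) + 1 := by omega
          have h2 : b + 1 - ((i : ℕ) + 1) = b - (i : ℕ) := by omega
          rw [h1, h2]
          exact HilbAux.map_mkQ_strict le_sup_left (sc (b - (i : ℕ)) (by omega)) }
    have hchain : ((b + 1 : ℕ) : WithBot ℕ∞) ≤ Order.krullDim (Submodule A (M ⧸ W)) :=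
      Order.LTSeries.length_le_krullDim p
    have hfin := HilbAux.le_llen_of_le_krullDim (b + 1) hchain
    rw [show ((b + 1 : ℕ) : ℕ∞) = (b : ℕ∞) + 1 by push_cast; ring] at hfin
    exact hfin
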